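/- Let p, q be primes with q dividing (p^p-1)/(p-1), and let M in GL_p(F_p) have order q. Then the only M-invariant F_p-subspaces of the column space V = F_p^p are 0 and V. -/

import Mathlib

open Module

lemma nt_aux {p q : ℕ} (hp : p.Prime) (hq : q.Prime)
    (hdvd : q ∣ ∑ i ∈ Finset.range p, p ^ i) :
    ¬ q ∣ p ∧ ∀ k, 0 < k → k < p → ¬ q ∣ (p ^ k - 1) := by
  have hqp : ¬ q ∣ p := by
    intro h
    have h1 : q ∣ ∑ i ∈ Finset.range (p - 1), p ^ (i + 1) :=
      Finset.dvd_sum fun i _ => dvd_pow h (Nat.succ_ne_zero i)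
    have key : ∀ n : ℕ, ∑ i ∈ Finset.range (n + 1), p ^ i
        = (∑ i ∈ Finset.range n, p ^ (i + 1)) + 1 := by
      intro n; rw [Finset.sum_range_succ']; simp
    have hsum := key (p - 1)
    rw [Nat.sub_add_cancel hp.pos] at hsum
    rw [hsum] at hdvd
    have := (Nat.dvd_add_right h1).mp hdvd
    exact hq.one_lt.ne' (Nat.dvd_one.mp this)
  set x : ZMod q := (p : ZMod q) with hxdef
  have hsum0 : ∑ i ∈ Finset.range p, x ^ i = 0 := by
    have := (ZMod.natCast_eq_zero_iff _ q).mpr hdvd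
    push_cast at this
    exact this
  have hxp : x ^ p = 1 := by
    have h := geom_sum_mul x p
    rw [hsum0, zero_mul] at h
    exact sub_eq_zero.mp h.symm
  have hx1 : x ≠ 1 := by
    intro h
    rw [h] at hsum0
    simp at hsum0
    exact hqp ((ZMod.natCast_eq_zero_iff p q).mp hsum0)
  have hord : orderOf x = p := by
    have hdvd' : orderOf x ∣ p := orderOf_dvd_of_pow_eq_one hxp
    rcases hp.eq_one_or_self_of_dvd _ hdvd' with h | h
    · exact absurd (orderOf_eq_one_iff.mp h) hx1
    · exact h
  refine ⟨hqp, fun k hk0 hkp hdvdk => ?_⟩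
  have hxk : x ^ k = 1 := by
    have h1 : 1 ≤ p ^ k := Nat.one_le_pow _ _ hp.pos
    have h := (ZMod.natCast_eq_zero_iff _ q).mpr hdvdk
    rw [Nat.cast_sub h1] at h
    push_cast at h
    exact sub_eq_zero.mp h
  have h := orderOf_dvd_of_pow_eq_one hxk
  rw [hord] at h
  exact absurd (Nat.le_of_dvd hk0 h) (not_le.mpr hkp)

lemma keyB {p q : ℕ} (hp : p.Prime) (hq : q.Prime) (hqp : ¬ q ∣ p)
    (hord : ∀ k, 0 < k → k < p → ¬ q ∣ (p ^ k - 1))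
    {U : Type*} [AddCommGroup U] [Module (ZMod p) U] [Finite U]
    [Module.Finite (ZMod p) U]
    (hd : Module.finrank (ZMod p) U < p)
    (g : Module.End (ZMod p) U) (hg : g ^ q = 1) : g = 1 := by
  haveI : Fact p.Prime := ⟨hp⟩
  set d := Module.finrank (ZMod p) U with hdd
  have hq1 : (q - 1) + 1 = q := Nat.succ_pred_eq_of_pos hq.pos
  have hu1 : g * g ^ (q - 1) = 1 := by
    rw [← pow_succ']
    rw [hq1, hg]
  have hu2 : g ^ (q - 1) * g = 1 := by
    rw [← pow_succ]
    rw [hq1, hg]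
  let u : (Module.End (ZMod p) U)ˣ := ⟨g, g ^ (q - 1), hu1, hu2⟩
  haveI : Finite (Module.End (ZMod p) U) :=
    Finite.of_injective _ (DFunLike.coe_injective (F := Module.End (ZMod p) U))
  have hcard : Nat.card (Module.End (ZMod p) U)ˣ
      = ∏ i : Fin d, (p ^ d - p ^ (i : ℕ)) := by
    let b := Module.finBasis (ZMod p) U
    have e : (Module.End (ZMod p) U)ˣ ≃* (Matrix (Fin d) (Fin d) (ZMod p))ˣ :=
      Units.mapEquiv (LinearMap.toMatrixAlgEquiv b).toMulEquiv
    rw [Nat.card_congr e.toEquiv]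
    have h := Matrix.card_GL_field (𝔽 := ZMod p) d
    rwa [ZMod.card] at h
  have huq : u ^ q = 1 := by
    apply Units.ext
    rw [Units.val_pow_eq_pow_val, Units.val_one]
    exact hg
  have hdq : orderOf u ∣ q := orderOf_dvd_of_pow_eq_one huq
  have h2 : orderOf u ∣ ∏ i : Fin d, (p ^ d - p ^ (i : ℕ)) := by
    rw [← hcard]; exact orderOf_dvd_natCard u
  have hqnot : ¬ q ∣ ∏ i : Fin d, (p ^ d - p ^ (i : ℕ)) := by
    intro hdv
    obtain ⟨i, _, hi⟩ := hq.prime.exists_mem_finset_dvd hdv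
    have hip : (i : ℕ) < d := i.isLt
    have heq : p ^ d - p ^ (i : ℕ) = p ^ (i : ℕ) * (p ^ (d - (i : ℕ)) - 1) := by
      rw [Nat.mul_sub, mul_one, ← pow_add]
      congr 2
      omega
    rw [heq] at hi
    rcases hq.prime.dvd_mul.mp hi with h | h
    · exact hqp (hq.prime.dvd_of_dvd_pow h)
    · exact hord (d - (i : ℕ)) (by omega) (by omega) h
  have hou : orderOf u = 1 := by
    rcases hq.eq_one_or_self_of_dvd _ hdq with h | h
    · exact h
    · exact absurd (h ▸ h2) hqnot
  have := orderOf_eq_one_iff.mp hou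
  exact congrArg Units.val this

theorem stmt_4 (p q : ℕ) (hp : p.Prime) (hq : q.Prime)
    (hdvd : q ∣ ∑ i ∈ Finset.range p, p ^ i)
    (M : GL (Fin p) (ZMod p)) (hM : orderOf M = q)
    (W : Submodule (ZMod p) (Fin p → ZMod p))
    (hW : ∀ v ∈ W, (M : Matrix (Fin p) (Fin p) (ZMod p)).mulVec v ∈ W) :
    W = ⊥ ∨ W = ⊤ := by
  haveI : Fact p.Prime := ⟨hp⟩
  haveI : NeZero p := ⟨hp.pos.ne'⟩
  obtain ⟨hqp, hord⟩ := nt_aux hp hq hdvd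
  by_contra hcon
  push_neg at hcon
  obtain ⟨hbot, htop⟩ := hcon
  set f : Module.End (ZMod p) (Fin p → ZMod p) :=
    Matrix.toLinAlgEquiv' (M : Matrix (Fin p) (Fin p) (ZMod p)) with hf
  have hMq : (M : Matrix (Fin p) (Fin p) (ZMod p)) ^ q = 1 := by
    have h1 : M ^ q = 1 := hM ▸ pow_orderOf_eq_one M
    rw [← Units.val_pow_eq_pow_val, h1, Units.val_one]
  have hfq : f ^ q = 1 := by
    rw [hf, ← map_pow, hMq, map_one]
  have hfapp : ∀ v, f v = (M : Matrix (Fin p) (Fin p) (ZMod p)).mulVec v := by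
    intro v; rw [hf, Matrix.toLinAlgEquiv'_apply]
  have hfW : ∀ x ∈ W, f x ∈ W := by
    intro x hx; rw [hfapp]; exact hW x hx
  have hfin : Module.finrank (ZMod p) (Fin p → ZMod p) = p := by
    simp [Module.finrank_fintype_fun_eq_card]
  have hWlt : Module.finrank (ZMod p) W < p := by
    have := Submodule.finrank_lt (K := ZMod p) htop
    rwa [hfin] at this
  have hWpos : 0 < Module.finrank (ZMod p) W := by
    rcases Nat.eq_zero_or_pos (Module.finrank (ZMod p) W) with h | h
    · exact absurd (Submodule.finrank_eq_zero.mp h) hbot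
    · exact h
  have hg1 : f.restrict hfW = 1 := by
    apply keyB hp hq hqp hord hWlt
    rw [Module.End.pow_restrict]
    refine LinearMap.ext fun x => ?_
    refine Subtype.ext ?_
    rw [LinearMap.restrict_coe_apply, hfq]
    rfl
  have hres : ∀ x ∈ W, f x = x := by
    intro x hx
    have h := congrFun (congrArg DFunLike.coe hg1) ⟨x, hx⟩
    have h2 := congrArg Subtype.val h
    simpa [LinearMap.restrict_coe_apply] using h2
  have hle : W ≤ W.comap f := fun x hx => hfW x hx
  have hQlt : Module.finrank (ZMod p) ((Fin p → ZMod p) ⧸ W) < p := by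
    have h := Submodule.finrank_quotient_add_finrank W
    rw [hfin] at h
    omega
  have hg2 : W.mapQ W f hle = 1 := by
    apply keyB hp hq hqp hord hQlt
    rw [← Submodule.mapQ_pow]
    refine Submodule.linearMap_qext _ ?_
    ext x
    simp only [LinearMap.comp_apply, Submodule.mkQ_apply, Submodule.mapQ_apply, hfq]
    rfl
  have hquot : ∀ v : Fin p → ZMod p, f v - v ∈ W := by
    intro v
    have h := congrFun (congrArg DFunLike.coe hg2) (Submodule.Quotient.mk v)
    rw [Submodule.mapQ_apply] at h
    exact (Submodule.Quotient.eq W).mp h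
  set N : Module.End (ZMod p) (Fin p → ZMod p) := f - 1 with hNdef
  have hNv : ∀ v, N v = f v - v := by intro v; simp [hNdef]
  have hN2 : N ^ 2 = 0 := by
    refine LinearMap.ext fun v => ?_
    have h2 : N v ∈ W := (hNv v) ▸ hquot v
    have h3 : f (N v) = N v := hres _ h2
    rw [pow_two, Module.End.mul_apply, LinearMap.zero_apply, hNv (N v), h3, sub_self]
  haveI : Nontrivial (Module.End (ZMod p) (Fin p → ZMod p)) := by
    refine ⟨1, 0, fun h => ?_⟩
    have := congrFun (congrArg DFunLike.coe h) (fun _ => 1)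
    simpa using congrFun this 0
  haveI : CharP (Module.End (ZMod p) (Fin p → ZMod p)) p :=
    charP_of_injective_algebraMap' (ZMod p) p
  have hfp : f ^ p = 1 := by
    have hc : Commute (1 : Module.End (ZMod p) (Fin p → ZMod p)) N := Commute.one_left N
    have hfe : f = 1 + N := by
      show f = 1 + (f - 1)
      abel
    have hNp : N ^ p = 0 := by
      have h3 : N ^ p = N ^ 2 * N ^ (p - 2) := by
        rw [← pow_add]
        congr 1
        have := hp.two_le
        omega
      rw [h3, hN2, zero_mul]
    calc f ^ p = (1 + N) ^ p := by rw [← hfe]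
      _ = 1 ^ p + N ^ p := add_pow_char_of_commute _ hc
      _ = 1 := by rw [one_pow, hNp, add_zero]
  have hMat : (M : Matrix (Fin p) (Fin p) (ZMod p)) ^ p = 1 := by
    apply (Matrix.toLinAlgEquiv' (R := ZMod p) (n := Fin p)).injective
    rw [map_pow, map_one, ← hf, hfp]
  have hMp : M ^ p = 1 := by
    apply Units.ext
    rw [Units.val_pow_eq_pow_val, Units.val_one]
    exact hMat
  have : q ∣ p := hM ▸ orderOf_dvd_of_pow_eq_one hMp
  exact hqp this
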